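/- (Realizable transductive guarantee) Let H be a hypothesis class with rdim_{U^{-1}}(H) = d < ∞ and let D be a distribution over X × {±1} with OPT_{U^{-1}(U)} = 0. Draw (x, y) ∼ D^n and (x̃, ỹ) ∼ D^n. Then with probability at least 1 − δ, for all perturbations z ∈ U(x) and z̃ ∈ U(x̃), every ĥ ∈ H satisfying R_{U^{-1}}(ĥ; z, y) = 0 and R_{U^{-1}}(ĥ; z̃) = 0 has test error err_{z̃,ỹ}(ĥ) ≤ (d log(2n) + log(1/δ))/n. -/

import Mathlib

open MeasureTheory
open scoped ENNReal

def Uinv {X : Type*} (U : X → Set X) (z : X) : Set X := {x | z ∈ U x}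

def UinvU {X : Type*} (U : X → Set X) (x : X) : Set X := ⋃ z ∈ U x, Uinv U z

def RelShat {X : Type*} (H : Set (X → Bool)) (U : X → Set X) {k : ℕ} (z : Fin k → X) : Prop :=
  ∀ y : Fin k → Bool, ∃ x : Fin k → X, ∃ h ∈ H,
    ∀ i : Fin k, z i ∈ U (x i) ∧ ∀ w ∈ U (x i), h w = y i

noncomputable def rdim {X : Type*} (H : Set (X → Bool)) (U : X → Set X) : ℕ∞ :=
  ⨆ (k : ℕ) (_ : ∃ z : Fin k → X, RelShat H U z), (k : ℕ∞)



section AuxComb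

open Finset

variable {α : Type*} [Fintype α] [DecidableEq α]

/-- Pajor's corollary of Sauer–Shelah. -/
lemma aux_card_le_sum_choose (F : Finset (Finset α)) {d : ℕ}
    (hVC : ∀ s : Finset α, F.Shatters s → s.card ≤ d) :
    F.card ≤ ∑ i ∈ Finset.range (d + 1), (Fintype.card α).choose i := by
  classical
  refine (F.card_le_card_shatterer).trans ?_
  have hsub : F.shatterer ⊆ (Finset.range (d + 1)).biUnion
      (fun i => Finset.powersetCard i (univ : Finset α)) := by
    intro s hs
    rw [Finset.mem_shatterer] at hs
    refine Finset.mem_biUnion.2 ⟨s.card, ?_, ?_⟩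
    · exact Finset.mem_range.2 (Nat.lt_succ_of_le (hVC s hs))
    · exact Finset.mem_powersetCard.2 ⟨Finset.subset_univ _, rfl⟩
  refine (Finset.card_le_card hsub).trans ?_
  refine (Finset.card_biUnion_le).trans ?_
  refine Finset.sum_le_sum fun i _ => ?_
  rw [Finset.card_powersetCard, Finset.card_univ]

lemma aux_two_mul_choose_le {m k : ℕ} (hm : 2 ≤ m) (hk : 2 ≤ k) :
    2 * m.choose k ≤ m ^ k := by
  induction k, hk using Nat.le_induction with
  | base =>
      obtain ⟨m', rfl⟩ := Nat.exists_eq_add_of_le hm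
      have h2 : (2 + m').choose 2 * 2 = (2 + m') * (1 + m') := by
        have := Nat.choose_succ_right_eq (2 + m') 1
        simpa [Nat.choose_one_right, Nat.add_sub_cancel_left] using this
      nlinarith [h2]
  | succ k hk ih =>
      have hid : m.choose (k + 1) * (k + 1) = m.choose k * (m - k) :=
        Nat.choose_succ_right_eq m k
      have h1 : m.choose (k + 1) ≤ m.choose k * m := by
        calc m.choose (k + 1) ≤ m.choose (k + 1) * (k + 1) := Nat.le_mul_of_pos_right _ (by omega)
        _ = m.choose k * (m - k) := hid
        _ ≤ m.choose k * m := Nat.mul_le_mul_left _ (Nat.sub_le _ _)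
      calc 2 * m.choose (k + 1) ≤ 2 * (m.choose k * m) := Nat.mul_le_mul_left _ h1
      _ = (2 * m.choose k) * m := by ring
      _ ≤ m ^ k * m := Nat.mul_le_mul_right _ ih
      _ = m ^ (k + 1) := (pow_succ m k).symm

lemma aux_sum_choose_le_pow {m d : ℕ} (hm : 2 ≤ m) (hd : d ≠ 1) :
    ∑ i ∈ Finset.range (d + 1), m.choose i ≤ m ^ d := by
  rcases Nat.eq_zero_or_pos d with rfl | hd0
  · simp
  have hd2 : 2 ≤ d := by omega
  clear hd hd0
  induction d, hd2 using Nat.le_induction with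
  | base =>
      have h2 : m.choose 2 * 2 = m * (m - 1) := by
        have := Nat.choose_succ_right_eq m 1
        simpa [Nat.choose_one_right] using this
      have : ∑ i ∈ Finset.range 3, m.choose i = 1 + m + m.choose 2 := by
        rw [Finset.sum_range_succ, Finset.sum_range_succ, Finset.sum_range_one,
          Nat.choose_zero_right, Nat.choose_one_right]
      rw [this]
      obtain ⟨m', rfl⟩ := Nat.exists_eq_add_of_le hm
      have h2' : (2 + m').choose 2 * 2 = (2 + m') * (m' + 1) := by
        rw [h2]; congr 1; omega
      nlinarith [h2']
  | succ d hd ih =>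
      rw [Finset.sum_range_succ]
      have h1 : 2 * m.choose (d + 1) ≤ m ^ (d + 1) := aux_two_mul_choose_le hm (by omega)
      have h2 : 2 * (m ^ d) ≤ m ^ (d + 1) := by
        rw [pow_succ, mul_comm (m ^ d) m]
        exact Nat.mul_le_mul_right _ hm
      omega

/-- counting swaps compatible with a partial transversal. -/
lemma aux_count_swaps {n : ℕ} (E : Finset (Fin n ⊕ Fin n))
    (hfun : ∀ j ∈ E, ∀ j' ∈ E, Sum.elim id id j = Sum.elim id id j' → j = j') :
    ((Finset.univ.filter (fun σ : Fin n → Bool =>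
      ∀ j ∈ E, σ (Sum.elim id id j) = Sum.isLeft j)).card) * 2 ^ E.card ≤ 2 ^ n := by
  classical
  set T : Finset (Fin n) := E.image (Sum.elim id id) with hT
  have hTcard : T.card = E.card := Finset.card_image_of_injOn fun j hj j' hj' h => hfun j hj j' hj' h
  have hTle : T.card ≤ n := by
    simpa using Finset.card_le_card (Finset.subset_univ T)
  have hcount : (Finset.univ.filter (fun σ : Fin n → Bool =>
      ∀ j ∈ E, σ (Sum.elim id id j) = Sum.isLeft j)).card ≤ 2 ^ (n - T.card) := by
    have := Finset.card_le_card_of_injOn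
      (s := Finset.univ.filter (fun σ : Fin n → Bool =>
        ∀ j ∈ E, σ (Sum.elim id id j) = Sum.isLeft j))
      (t := (Finset.univ : Finset ({i : Fin n // i ∉ T} → Bool)))
      (fun (σ : Fin n → Bool) => (fun i : {i : Fin n // i ∉ T} => σ i.1))
      (fun σ _ => Finset.mem_univ _) ?_
    · refine this.trans ?_
      rw [Finset.card_univ, Fintype.card_fun, Fintype.card_bool]
      have : Fintype.card {i : Fin n // i ∉ T} = n - T.card := by
        rw [Fintype.card_subtype_compl, Fintype.card_coe, Fintype.card_fin]
      rw [this]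
    · intro σ hσ σ' hσ' h
      simp only [Finset.coe_filter, Set.mem_setOf_eq, Finset.mem_univ, true_and] at hσ hσ'
      funext i
      by_cases hi : i ∈ T
      · obtain ⟨j, hj, hji⟩ := Finset.mem_image.1 hi
        rw [← hji, hσ j hj, hσ' j hj]
      · exact congrFun h ⟨i, hi⟩
  calc (Finset.univ.filter (fun σ : Fin n → Bool =>
      ∀ j ∈ E, σ (Sum.elim id id j) = Sum.isLeft j)).card * 2 ^ E.card
      ≤ 2 ^ (n - T.card) * 2 ^ T.card := by
        rw [hTcard]
        rw [hTcard] at hcount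
        exact Nat.mul_le_mul_right _ hcount
    _ = 2 ^ n := by rw [← pow_add, Nat.sub_add_cancel hTle]

end AuxComb


section AuxD1

open Finset

variable {α : Type*} [Fintype α] [DecidableEq α]

lemma aux_pair (F : Finset (Finset α)) (hVC : ∀ s : Finset α, F.Shatters s → s.card ≤ 1)
    (hFcard : F.card = Fintype.card α + 1) (j : α) :
    ∃ E, E ∈ F ∧ j ∉ E ∧ insert j E ∈ F := by
  classical
  set m := Fintype.card α with hm
  set F0 : Finset (Finset α) := F.filter (fun E => j ∉ E) with hF0
  set F1 : Finset (Finset α) := (F.filter (fun E => j ∈ E)).image (fun E => E.erase j) with hF1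
  have hF1card : F1.card = (F.filter (fun E => j ∈ E)).card := by
    apply Finset.card_image_of_injOn
    intro E hE E' hE' h
    simp only [Finset.coe_filter, Set.mem_setOf_eq] at hE hE'
    have h' : E.erase j = E'.erase j := h
    have : insert j (E.erase j) = insert j (E'.erase j) := by rw [h']
    rwa [Finset.insert_erase hE.2, Finset.insert_erase hE'.2] at this
  have hsplit : F0.card + F1.card = m + 1 := by
    have h2 := Finset.card_filter_add_card_filter_not (s := F) (p := fun E => j ∈ E)
    rw [hF1card, hF0, ← hFcard]
    omega
  -- every set shattered by F0 ∪ F1 avoids j and is shattered by F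
  have hGsh : ∀ s : Finset α, (F0 ∪ F1).Shatters s → (j ∉ s ∧ F.Shatters s) := by
    intro s hs
    have hjs : j ∉ s := by
      obtain ⟨u, hu, hsu⟩ := hs (Finset.Subset.refl s)
      have hju : j ∉ u := by
        rcases Finset.mem_union.1 hu with h | h
        · exact (Finset.mem_filter.1 h).2
        · obtain ⟨B, _, rfl⟩ := Finset.mem_image.1 h
          exact Finset.notMem_erase _ _
      intro hjs'
      have hj' : j ∈ s ∩ u := by rw [hsu]; exact hjs'
      exact hju (Finset.mem_inter.1 hj').2
    refine ⟨hjs, fun t ht => ?_⟩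
    obtain ⟨u, hu, hsu⟩ := hs ht
    rcases Finset.mem_union.1 hu with h | h
    · exact ⟨u, (Finset.mem_filter.1 h).1, hsu⟩
    · obtain ⟨B, hB, rfl⟩ := Finset.mem_image.1 h
      refine ⟨B, (Finset.mem_filter.1 hB).1, ?_⟩
      have : s ∩ B = s ∩ (B.erase j) := by
        ext x
        simp only [Finset.mem_inter, Finset.mem_erase]
        constructor
        · rintro ⟨hx1, hx2⟩
          exact ⟨hx1, fun hxj => hjs (hxj ▸ hx1), hx2⟩
        · rintro ⟨hx1, _, hx2⟩
          exact ⟨hx1, hx2⟩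
      rw [this]; exact hsu
  -- bound the union
  have hGcard : (F0 ∪ F1).card ≤ m := by
    have hsub : (F0 ∪ F1).shatterer ⊆
        insert ∅ ((Finset.univ.erase j).image (fun x => ({x} : Finset α))) := by
      intro s hs
      rw [Finset.mem_shatterer] at hs
      obtain ⟨hjs, hFs⟩ := hGsh s hs
      haveI : Nonempty α := ⟨j⟩
      have hcard : s.card ≤ 1 := hVC s hFs
      rcases Finset.card_le_one_iff_subset_singleton.1 hcard with ⟨x, hx⟩
      rcases Finset.subset_singleton_iff.1 hx with rfl | rfl
      · exact Finset.mem_insert_self _ _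
      · refine Finset.mem_insert_of_mem (Finset.mem_image.2 ⟨x, ?_, rfl⟩)
        refine Finset.mem_erase.2 ⟨?_, Finset.mem_univ _⟩
        intro hxj
        exact hjs (hxj ▸ Finset.mem_singleton_self x)
    refine (Finset.card_le_card_shatterer _).trans ((Finset.card_le_card hsub).trans ?_)
    refine (Finset.card_insert_le _ _).trans ?_
    have : ((Finset.univ.erase j).image (fun x => ({x} : Finset α))).card ≤ m - 1 := by
      refine (Finset.card_image_le).trans ?_
      rw [Finset.card_erase_of_mem (Finset.mem_univ _), Finset.card_univ]
    have hm1 : 1 ≤ m := Fintype.card_pos_iff.mpr ⟨j⟩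
    omega
  have hinter : 1 ≤ (F0 ∩ F1).card := by
    have := Finset.card_union_add_card_inter F0 F1
    omega
  obtain ⟨E, hE⟩ := Finset.card_pos.1 hinter
  have hE0 := Finset.mem_inter.1 hE |>.1
  have hE1 := Finset.mem_inter.1 hE |>.2
  have hEF : E ∈ F := (Finset.mem_filter.1 hE0).1
  have hjE : j ∉ E := (Finset.mem_filter.1 hE0).2
  obtain ⟨B, hB, hBE⟩ := Finset.mem_image.1 hE1
  have hBF := (Finset.mem_filter.1 hB).1
  have hjB := (Finset.mem_filter.1 hB).2
  refine ⟨E, hEF, hjE, ?_⟩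
  rw [← hBE, Finset.insert_erase hjB]
  exact hBF

end AuxD1


section AuxD1b
open Finset
variable {α : Type*} [Fintype α] [DecidableEq α]

lemma aux_d1_sum (F : Finset (Finset α)) (hVC : ∀ s : Finset α, F.Shatters s → s.card ≤ 1)
    {κ n' : ℕ} (hκ : 2 ≤ κ) (hn' : n' < Fintype.card α)
    (hcards : ∀ E ∈ F, κ ≤ E.card ∧ E.card ≤ n')
    (N : ℕ) (c : Finset α → ℕ)
    (hc1 : ∀ E ∈ F, c E ≤ 2 * N)
    (hc2 : ∀ E ∈ F, E.card ≠ κ → c E ≤ N) :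
    ∑ E ∈ F, c E ≤ Fintype.card α * (2 * N) := by
  classical
  set m := Fintype.card α with hm
  have hm1 : 1 ≤ m := by omega
  have hFle : F.card ≤ m + 1 := by
    refine (aux_card_le_sum_choose F hVC).trans ?_
    rw [Finset.sum_range_succ, Finset.sum_range_one, Nat.choose_zero_right,
      Nat.choose_one_right]
    omega
  set I : Finset (Finset α) := F.filter (fun E => E.card = κ) with hI
  have hIsub : I ⊆ F := by rw [hI]; exact Finset.filter_subset _ _
  have hIF : I.card ≤ F.card := Finset.card_le_card hIsub
  have hIdef : I.card = (F.filter (fun E => E.card = κ)).card := by rw [hI]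
  -- the key cardinality bound
  have hkey : 2 * I.card + (F.card - I.card) ≤ 2 * m := by
    by_cases hFcard : F.card = m + 1
    · -- star case: show I.card ≤ m - 1
      have hIle : I.card ≤ m - 1 := by
        by_contra hIc
        push_neg at hIc
        have hIm : m ≤ I.card := by omega
        set R : Finset (Finset α) := F \ I with hR
        have hRcard : R.card ≤ 1 := by
          have hsd : R.card = F.card - I.card := by rw [hR]; exact Finset.card_sdiff_of_subset hIsub
          omega
        haveI hne : Nonempty α := Fintype.card_pos_iff.1 (by omega)
        have hpair : ∀ j : α, ∃ E, E ∈ F ∧ j ∉ E ∧ insert j E ∈ F ∧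
            (E ∈ R ∨ insert j E ∈ R) := by
          intro j
          obtain ⟨E, hEF, hjE, hiE⟩ := aux_pair F hVC hFcard j
          refine ⟨E, hEF, hjE, hiE, ?_⟩
          by_contra hcon
          push_neg at hcon
          have h1 : E ∈ I := by
            have := hcon.1
            rw [hR, Finset.mem_sdiff] at this
            tauto
          have h2 : insert j E ∈ I := by
            have := hcon.2
            rw [hR, Finset.mem_sdiff] at this
            tauto
          have c1 : E.card = κ := (Finset.mem_filter.1 h1).2
          have c2 : (insert j E).card = κ := (Finset.mem_filter.1 h2).2
          rw [Finset.card_insert_of_notMem hjE] at c2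
          omega
        -- R is a singleton {u}
        obtain ⟨j₀⟩ := hne
        have hRne : R.Nonempty := by
          obtain ⟨E, hEF, hjE, hiE, hout⟩ := hpair j₀
          rcases hout with h | h
          · exact ⟨E, h⟩
          · exact ⟨_, h⟩
        have hR1 : R.card = 1 := le_antisymm hRcard (Finset.card_pos.2 hRne)
        obtain ⟨u, hu⟩ := Finset.card_eq_one.1 hR1
        have huF : u ∈ F := by
          have : u ∈ R := by rw [hu]; exact Finset.mem_singleton_self u
          exact (Finset.mem_sdiff.1 (by rwa [hR] at this)).1
        have hbranch : ∀ j : α, (j ∉ u ∧ (insert j u).card = κ) ∨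
            (j ∈ u ∧ u.card - 1 = κ) := by
          intro j
          obtain ⟨E, hEF, hjE, hiE, hout⟩ := hpair j
          have hEne : E ≠ insert j E := by
            intro h
            exact hjE (h ▸ Finset.mem_insert_self j E)
          rcases hout with h | h
          · -- E = u
            have hEu : E = u := by rw [hu] at h; exact Finset.mem_singleton.1 h
            left
            subst hEu
            refine ⟨hjE, ?_⟩
            have hins : insert j E ∈ I := by
              by_contra hni
              have : insert j E ∈ R := by
                rw [hR, Finset.mem_sdiff]; exact ⟨hiE, hni⟩
              rw [hu, Finset.mem_singleton] at this
              exact hEne this.symm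
            exact (Finset.mem_filter.1 hins).2
          · -- insert j E = u
            have hEu : insert j E = u := by rw [hu] at h; exact Finset.mem_singleton.1 h
            right
            have hju : j ∈ u := hEu ▸ Finset.mem_insert_self j E
            refine ⟨hju, ?_⟩
            have hEI : E ∈ I := by
              by_contra hni
              have : E ∈ R := by
                rw [hR, Finset.mem_sdiff]; exact ⟨hEF, hni⟩
              rw [hu, Finset.mem_singleton] at this
              exact hEne (this.trans hEu.symm)
            have hcE : E.card = κ := (Finset.mem_filter.1 hEI).2
            have : u.card = E.card + 1 := by
              rw [← hEu, Finset.card_insert_of_notMem hjE]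
            omega
        -- derive contradiction
        have hucard : u.card ≤ n' := (hcards u huF).2
        by_cases hu0 : u = ∅
        · rcases hbranch j₀ with ⟨hj, hc⟩ | ⟨hj, _⟩
          · rw [hu0] at hc
            have hone : (insert j₀ (∅ : Finset α)).card = 1 := by simp
            omega
          · rw [hu0] at hj
            exact absurd hj (Finset.notMem_empty j₀)
        · obtain ⟨j₁, hj₁⟩ := Finset.nonempty_of_ne_empty hu0
          have hB : u.card - 1 = κ := by
            rcases hbranch j₁ with ⟨hj, _⟩ | ⟨_, hc⟩
            · exact absurd hj₁ hj
            · exact hc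
          have hj1card : 1 ≤ u.card := Finset.card_pos.2 ⟨j₁, hj₁⟩
          by_cases huniv : ∀ j : α, j ∈ u
          · have : u = Finset.univ := Finset.eq_univ_iff_forall.2 huniv
            rw [this, Finset.card_univ] at hucard
            omega
          · push_neg at huniv
            obtain ⟨j₂, hj₂⟩ := huniv
            rcases hbranch j₂ with ⟨_, hc⟩ | ⟨hj, _⟩
            · rw [Finset.card_insert_of_notMem hj₂] at hc
              omega
            · exact absurd hj hj₂
      omega
    · omega
  -- combine
  have hsplit := Finset.sum_filter_add_sum_filter_not F (fun E => E.card = κ) c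
  have hcnt := Finset.card_filter_add_card_filter_not (s := F)
    (p := fun E => E.card = κ)
  have h1 : ∑ E ∈ F.filter (fun E => E.card = κ), c E ≤ I.card * (2 * N) := by
    have := Finset.sum_le_card_nsmul (F.filter (fun E => E.card = κ)) c (2 * N)
      (fun E hE => hc1 E (Finset.mem_filter.1 hE).1)
    simpa [smul_eq_mul, mul_comm] using this
  have h2 : ∑ E ∈ F.filter (fun E => ¬E.card = κ), c E ≤
      (F.filter (fun E => ¬E.card = κ)).card * N := by
    have := Finset.sum_le_card_nsmul (F.filter (fun E => ¬E.card = κ)) c N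
      (fun E hE => hc2 E (Finset.mem_filter.1 hE).1 (Finset.mem_filter.1 hE).2)
    simpa [smul_eq_mul] using this
  have hfinal : ∑ E ∈ F, c E ≤ I.card * (2 * N) + (F.card - I.card) * N := by
    rw [← hsplit]
    have h3 : (F.filter (fun E => ¬E.card = κ)).card = F.card - I.card := by
      have := hIdef
      omega
    rw [← h3]
    exact Nat.add_le_add h1 h2
  refine hfinal.trans ?_
  calc I.card * (2 * N) + (F.card - I.card) * N
      = (2 * I.card + (F.card - I.card)) * N := by ring
    _ ≤ (2 * m) * N := Nat.mul_le_mul_right _ hkey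
    _ = m * (2 * N) := by ring

end AuxD1b



section AuxMeas

variable {W : Type*} [MeasurableSpace W]

/-- The permutation of `Fin n ⊕ Fin n` swapping the two copies at indices where `σ` is true. -/
def swapPerm {n : ℕ} (σ : Fin n → Bool) : (Fin n ⊕ Fin n) ≃ (Fin n ⊕ Fin n) where
  toFun j := Sum.elim (fun i => if σ i then Sum.inr i else Sum.inl i)
    (fun i => if σ i then Sum.inl i else Sum.inr i) j
  invFun j := Sum.elim (fun i => if σ i then Sum.inr i else Sum.inl i)
    (fun i => if σ i then Sum.inl i else Sum.inr i) j
  left_inv j := by rcases j with i | i <;> by_cases h : σ i <;> simp [h]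
  right_inv j := by rcases j with i | i <;> by_cases h : σ i <;> simp [h]

/-- The swap map on pairs of samples. -/
def swapMap {n : ℕ} (σ : Fin n → Bool) (p : (Fin n → W) × (Fin n → W)) :
    (Fin n → W) × (Fin n → W) :=
  (fun i => if σ i then p.2 i else p.1 i, fun i => if σ i then p.1 i else p.2 i)

lemma swapMap_measurePreserving {n : ℕ} (σ : Fin n → Bool) (D : Measure W)
    [IsProbabilityMeasure D] :
    MeasurePreserving (swapMap (W := W) σ)
      ((Measure.pi fun _ : Fin n => D).prod (Measure.pi fun _ : Fin n => D))
      ((Measure.pi fun _ : Fin n => D).prod (Measure.pi fun _ : Fin n => D)) := by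
  set e := MeasurableEquiv.sumPiEquivProdPi (fun _ : Fin n ⊕ Fin n => W) with he_def
  have he : MeasurePreserving e (Measure.pi fun _ : Fin n ⊕ Fin n => D)
      ((Measure.pi fun _ : Fin n => D).prod (Measure.pi fun _ : Fin n => D)) :=
    measurePreserving_sumPiEquivProdPi (fun _ => D)
  set q := (MeasurableEquiv.piCongrLeft (fun _ : Fin n ⊕ Fin n => W) (swapPerm σ)).symm
    with hq_def
  have hq : MeasurePreserving q (Measure.pi fun _ : Fin n ⊕ Fin n => D)
      (Measure.pi fun _ : Fin n ⊕ Fin n => D) :=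
    (measurePreserving_piCongrLeft (fun _ : Fin n ⊕ Fin n => D) (swapPerm σ)).symm _
  have hcomp : swapMap (W := W) σ = e ∘ q ∘ e.symm := by
    funext p
    have hp : p = e (e.symm p) := (e.apply_symm_apply p).symm
    rw [hp]
    set γ := e.symm p with hγ
    have hqγ : ∀ j, q γ j = γ (swapPerm σ j) := by
      intro j
      rfl
    have heγ1 : ∀ (γ' : Fin n ⊕ Fin n → W) (i : Fin n), (e γ').1 i = γ' (Sum.inl i) := by
      intro γ' i; rfl
    have heγ2 : ∀ (γ' : Fin n ⊕ Fin n → W) (i : Fin n), (e γ').2 i = γ' (Sum.inr i) := by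
      intro γ' i; rfl
    simp only [Function.comp_apply]
    rw [e.symm_apply_apply]
    refine Prod.ext ?_ ?_
    · funext i
      show (if σ i then (e γ).2 i else (e γ).1 i) = (e (q γ)).1 i
      rw [heγ1, heγ2, heγ1 (q γ) i, hqγ (Sum.inl i)]
      by_cases h : σ i <;> simp [swapPerm, h]
    · funext i
      show (if σ i then (e γ).1 i else (e γ).2 i) = (e (q γ)).2 i
      rw [heγ1, heγ2, heγ2 (q γ) i, hqγ (Sum.inr i)]
      by_cases h : σ i <;> simp [swapPerm, h]
  rw [hcomp]
  exact he.comp (hq.comp (MeasurePreserving.symm e he))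

end AuxMeas


section AuxReal

lemma aux_real {d n bad κ : ℕ} (hn : 0 < n) {δ : ℝ} (hδ : 0 < δ) (hδ1 : δ < 1)
    (hκ : (d : ℝ) * Real.logb 2 (2 * n) + Real.logb 2 (1 / δ) < κ)
    (hcount : bad * 2 ^ κ ≤ (2 * n) ^ d * 2 ^ n) : (bad : ℝ) ≤ 2 ^ n * δ := by
  have h2n : (0 : ℝ) < 2 * n := by positivity
  have hδ' : (0 : ℝ) < 1 / δ := by positivity
  set B : ℝ := (d : ℝ) * Real.logb 2 (2 * n) + Real.logb 2 (1 / δ) with hB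
  have hpow : (2 * (n : ℝ)) ^ d * (1 / δ) ≤ (2 : ℝ) ^ κ := by
    have h1 : (2 : ℝ) ^ (B : ℝ) = (2 * (n : ℝ)) ^ d * (1 / δ) := by
      rw [hB, Real.rpow_add (by norm_num : (0:ℝ) < 2)]
      congr 1
      · rw [mul_comm (d : ℝ) _, Real.rpow_mul (by norm_num : (0:ℝ) ≤ 2),
          Real.rpow_logb (by norm_num) (by norm_num) h2n, Real.rpow_natCast]
      · rw [Real.rpow_logb (by norm_num) (by norm_num) hδ']
    have h2 : (2 : ℝ) ^ (B : ℝ) ≤ (2 : ℝ) ^ ((κ : ℕ) : ℝ) :=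
      Real.rpow_le_rpow_of_exponent_le (by norm_num) hκ.le
    rw [Real.rpow_natCast] at h2
    rw [← h1]
    exact h2
  have hc : (bad : ℝ) * 2 ^ κ ≤ (2 * n) ^ d * 2 ^ n := by
    have := hcount
    exact_mod_cast this
  have hP : (0 : ℝ) < (2 * (n : ℝ)) ^ d := by positivity
  have hb1 : (bad : ℝ) * ((2 * (n : ℝ)) ^ d * (1 / δ)) ≤ (bad : ℝ) * 2 ^ κ :=
    mul_le_mul_of_nonneg_left hpow (Nat.cast_nonneg _)
  have hkey : (bad : ℝ) * ((2 * (n : ℝ)) ^ d * (1 / δ)) ≤ (2 * n) ^ d * 2 ^ n :=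
    hb1.trans hc
  have hkey2 : (bad : ℝ) * (2 * (n : ℝ)) ^ d ≤ ((2 * n) ^ d * 2 ^ n) * δ := by
    have := mul_le_mul_of_nonneg_right hkey hδ.le
    calc (bad : ℝ) * (2 * (n : ℝ)) ^ d
        = ((bad : ℝ) * ((2 * (n : ℝ)) ^ d * (1 / δ))) * δ := by
          field_simp
      _ ≤ ((2 * n) ^ d * 2 ^ n) * δ := this
  have := (mul_le_mul_iff_of_pos_right hP).2 (le_refl (1 : ℝ))
  nlinarith [hkey2, hP]

end AuxReal

section MainProof

set_option maxHeartbeats 2000000 in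
/-- Realizable transductive guarantee: if `rdim_{U⁻¹}(H) ≤ d` and `OPT_{U⁻¹(U)} = 0`,
then with probability ≥ 1 − δ over i.i.d. training and test samples of size `n`, for all
perturbations `z ∈ U(x)`, `z̃ ∈ U(x̃)`, every `ĥ ∈ H` with `R_{U⁻¹}(ĥ; z, y) = 0` and
`R_{U⁻¹}(ĥ; z̃) = 0` has test error at most `(d log(2n) + log(1/δ))/n`. -/
theorem stmt_11 {X : Type*} [MeasurableSpace X] (U : X → Set X)
    (H : Set (X → Bool)) (d n : ℕ) (hn : 0 < n)
    (hd : rdim H (Uinv U) ≤ (d : ℕ∞))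
    (D : Measure (X × Bool)) [IsProbabilityMeasure D]
    (hOPT : (⨅ h : H, D {p : X × Bool | ∃ x' ∈ UinvU U p.1, (h : X → Bool) x' ≠ p.2}) = 0)
    (δ : ℝ) (hδ : 0 < δ) (hδ1 : δ < 1) :
    ENNReal.ofReal (1 - δ) ≤
      ((Measure.pi fun _ : Fin n => D).prod (Measure.pi fun _ : Fin n => D))
        {p : (Fin n → X × Bool) × (Fin n → X × Bool) |
          ∀ z : Fin n → X, (∀ i, z i ∈ U ((p.1 i).1)) →
          ∀ zt : Fin n → X, (∀ i, zt i ∈ U ((p.2 i).1)) →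
          ∀ h ∈ H,
            (∀ i : Fin n, ∀ x' ∈ Uinv U (z i), h x' = (p.1 i).2) →
            (∀ i : Fin n, ∀ x' ∈ Uinv U (zt i), h x' = h (zt i)) →
            (Set.ncard {i : Fin n | h (zt i) ≠ (p.2 i).2} : ℝ) / n ≤
              (d * Real.logb 2 (2 * n) + Real.logb 2 (1 / δ)) / n} := by
  classical
  set μ2 : Measure ((Fin n → X × Bool) × (Fin n → X × Bool)) :=
    ((Measure.pi fun _ : Fin n => D).prod (Measure.pi fun _ : Fin n => D)) with hμ2
  set S : Set ((Fin n → X × Bool) × (Fin n → X × Bool)) :=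
    {p : (Fin n → X × Bool) × (Fin n → X × Bool) |
      ∀ z : Fin n → X, (∀ i, z i ∈ U ((p.1 i).1)) →
      ∀ zt : Fin n → X, (∀ i, zt i ∈ U ((p.2 i).1)) →
      ∀ h ∈ H,
        (∀ i : Fin n, ∀ x' ∈ Uinv U (z i), h x' = (p.1 i).2) →
        (∀ i : Fin n, ∀ x' ∈ Uinv U (zt i), h x' = h (zt i)) →
        (Set.ncard {i : Fin n | h (zt i) ≠ (p.2 i).2} : ℝ) / n ≤
          (d * Real.logb 2 (2 * n) + Real.logb 2 (1 / δ)) / n} with hSdef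
  set B : ℝ := (d : ℝ) * Real.logb 2 (2 * n) + Real.logb 2 (1 / δ) with hBdef
  have h2n1 : (1 : ℝ) ≤ 2 * n := by
    have : (1 : ℝ) ≤ (n : ℝ) := by exact_mod_cast hn
    nlinarith
  have hlogb_pos : 0 < Real.logb 2 (1 / δ) :=
    Real.logb_pos (by norm_num) (one_lt_one_div hδ hδ1)
  have hB0 : 0 ≤ B := by
    have h1 : (0 : ℝ) ≤ (d : ℝ) * Real.logb 2 (2 * n) := by
      have := Real.logb_nonneg (b := 2) (by norm_num) h2n1
      positivity
    rw [hBdef]; linarith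
  set κ : ℕ := Nat.floor B + 1 with hκdef
  have hBκ : B < κ := by
    rw [hκdef]; push_cast; exact Nat.lt_floor_add_one B
  -- THE COMBINATORIAL KEY
  have key : ∀ p : (Fin n → X × Bool) × (Fin n → X × Bool),
      ((Finset.univ.filter
        (fun σ : Fin n → Bool => swapMap σ p ∉ S)).card) * 2 ^ κ ≤
        (2 * n) ^ d * 2 ^ n := by
    intro p
    set pt : Fin n ⊕ Fin n → X × Bool := Sum.elim p.1 p.2 with hptdef
    set Rob : (X → Bool) → X → Bool → Prop :=
      fun h x b => ∃ ζ, ζ ∈ U x ∧ ∀ x' ∈ Uinv U ζ, h x' = b with hRobdef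
    set Fp : Finset (Finset (Fin n ⊕ Fin n)) :=
      Finset.univ.filter (fun E =>
        (κ ≤ E.card ∧ E.card ≤ n ∧
          (∀ j ∈ E, ∀ j' ∈ E, Sum.elim id id j = Sum.elim id id j' → j = j')) ∧
        ∃ h ∈ H, ∀ j, Rob h (pt j).1 (if j ∈ E then !(pt j).2 else (pt j).2)) with hFpdef
    -- VC bound for Fp via relaxed shattering
    have hVC : ∀ s : Finset (Fin n ⊕ Fin n), Fp.Shatters s → s.card ≤ d := by
      intro s hs
      have hscard : Fintype.card ↥s = s.card := Fintype.card_coe s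
      set e : Fin s.card ≃ ↥s := (Fintype.equivFinOfCardEq hscard).symm with hedef
      set z : Fin s.card → X := fun a => (pt ((e a) : Fin n ⊕ Fin n)).1 with hzdef
      have hRel : RelShat H (Uinv U) z := by
        intro y'
        set t : Finset (Fin n ⊕ Fin n) :=
          (s.attach.filter (fun j => y' (e.symm j) ≠ (pt j.1).2)).image Subtype.val with htdef
        have hts : t ⊆ s := by
          intro x hx
          rw [htdef, Finset.mem_image] at hx
          obtain ⟨j, _, rfl⟩ := hx
          exact j.2
        obtain ⟨E, hEF, hsE⟩ := hs hts
        rw [hFpdef, Finset.mem_filter] at hEF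
        obtain ⟨-, -, h, hH, hRob⟩ := hEF
        have hlbl : ∀ a : Fin s.card,
            (if ((e a) : Fin n ⊕ Fin n) ∈ E then !(pt ((e a) : Fin n ⊕ Fin n)).2
              else (pt ((e a) : Fin n ⊕ Fin n)).2) = y' a := by
          intro a
          have hjs : ((e a) : Fin n ⊕ Fin n) ∈ s := (e a).2
          have hmem : (((e a) : Fin n ⊕ Fin n) ∈ E) ↔
              y' a ≠ (pt ((e a) : Fin n ⊕ Fin n)).2 := by
            constructor
            · intro hE
              have hin : ((e a) : Fin n ⊕ Fin n) ∈ s ∩ E := Finset.mem_inter.2 ⟨hjs, hE⟩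
              rw [hsE, htdef, Finset.mem_image] at hin
              obtain ⟨j, hjf, hval⟩ := hin
              have hje : j = e a := Subtype.ext hval
              rw [hje, Finset.mem_filter] at hjf
              have hy := hjf.2
              rwa [e.symm_apply_apply] at hy
            · intro hy
              have hin : ((e a) : Fin n ⊕ Fin n) ∈ t := by
                rw [htdef, Finset.mem_image]
                refine ⟨e a, Finset.mem_filter.2 ⟨Finset.mem_attach _ _, ?_⟩, rfl⟩
                rwa [e.symm_apply_apply]
              rw [← hsE] at hin
              exact (Finset.mem_inter.1 hin).2
          by_cases hE : ((e a) : Fin n ⊕ Fin n) ∈ E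
          · rw [if_pos hE]
            have := hmem.1 hE
            cases hya : y' a <;> cases hpa : (pt ((e a) : Fin n ⊕ Fin n)).2 <;> simp_all
          · rw [if_neg hE]
            have := hmem.not.1 hE
            push_neg at this
            exact this.symm
        refine ⟨fun a => Classical.choose (hRob ((e a) : Fin n ⊕ Fin n)), h, hH, fun a => ?_⟩
        obtain ⟨hζU, hζrob⟩ := Classical.choose_spec (hRob ((e a) : Fin n ⊕ Fin n))
        refine ⟨hζU, ?_⟩
        intro w hw
        rw [hζrob w hw, hlbl a]
      have hle : (s.card : ℕ∞) ≤ rdim H (Uinv U) := by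
        refine le_iSup_of_le s.card ?_
        exact le_iSup_of_le ⟨z, hRel⟩ le_rfl
      exact_mod_cast hle.trans hd
    -- bad σ's are covered by the union over Fp
    have hsub : Finset.univ.filter (fun σ : Fin n → Bool => swapMap σ p ∉ S) ⊆
        Fp.biUnion (fun E => Finset.univ.filter
          (fun σ : Fin n → Bool => ∀ j ∈ E, σ (Sum.elim id id j) = Sum.isLeft j)) := by
      intro σ hσ
      rw [Finset.mem_filter] at hσ
      obtain ⟨-, hσ⟩ := hσ
      rw [hSdef, Set.mem_setOf_eq] at hσ
      push_neg at hσ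
      obtain ⟨z, hz, zt, hzt, h, hH, c1, c2, hbound⟩ := hσ
      set err : Finset (Fin n) :=
        Finset.univ.filter (fun i => h (zt i) ≠ ((swapMap σ p).2 i).2) with herrdef
      have hncard : Set.ncard {i : Fin n | h (zt i) ≠ ((swapMap σ p).2 i).2} = err.card := by
        rw [show {i : Fin n | h (zt i) ≠ ((swapMap σ p).2 i).2} = ↑err by
          ext i; simp [herrdef]]
        exact Set.ncard_coe_finset _
      have herrB : B < err.card := by
        have hnR : (0 : ℝ) < n := by exact_mod_cast hn
        have h' := hbound
        rw [hncard, div_lt_div_iff₀ hnR hnR] at h'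
        exact lt_of_mul_lt_mul_right h' hnR.le
      have hκerr : κ ≤ err.card := by
        rw [hκdef]
        have := (Nat.floor_lt hB0).2 herrB
        omega
      set E : Finset (Fin n ⊕ Fin n) :=
        err.image (fun i => if σ i then Sum.inl i else Sum.inr i) with hEdef
      have hidx : ∀ a : Fin n,
          Sum.elim id id (if σ a then (Sum.inl a : Fin n ⊕ Fin n) else Sum.inr a) = a := by
        intro a; by_cases ha : σ a <;> simp [ha]
      have hinj : Function.Injective
          (fun i : Fin n => if σ i then (Sum.inl i : Fin n ⊕ Fin n) else Sum.inr i) := by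
        intro a b hab
        have := congrArg (Sum.elim id id) hab
        rwa [hidx a, hidx b] at this
      have hEcard : E.card = err.card := by
        rw [hEdef]; exact Finset.card_image_of_injective _ hinj
      have hmemEl : ∀ i : Fin n, (Sum.inl i ∈ E) ↔ (σ i = true ∧ i ∈ err) := by
        intro i
        rw [hEdef, Finset.mem_image]
        constructor
        · rintro ⟨a, ha, hai⟩
          by_cases hsa : σ a
          · rw [if_pos hsa] at hai
            obtain rfl := Sum.inl.inj hai
            exact ⟨hsa, ha⟩
          · rw [if_neg hsa] at hai
            exact absurd hai (by simp)
        · rintro ⟨hσi, hi⟩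
          exact ⟨i, hi, by rw [if_pos hσi]⟩
      have hmemEr : ∀ i : Fin n, (Sum.inr i ∈ E) ↔ (σ i = false ∧ i ∈ err) := by
        intro i
        rw [hEdef, Finset.mem_image]
        constructor
        · rintro ⟨a, ha, hai⟩
          by_cases hsa : σ a
          · rw [if_pos hsa] at hai
            exact absurd hai (by simp)
          · rw [if_neg hsa] at hai
            obtain rfl := Sum.inr.inj hai
            exact ⟨Bool.eq_false_iff.2 hsa, ha⟩
        · rintro ⟨hσi, hi⟩
          exact ⟨i, hi, by rw [if_neg (by simp [hσi])]⟩
      have hEFp : E ∈ Fp := by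
        rw [hFpdef, Finset.mem_filter]
        refine ⟨Finset.mem_univ _, ⟨?_, ?_, ?_⟩, h, hH, ?_⟩
        · rw [hEcard]; exact hκerr
        · rw [hEcard]
          have := Finset.card_le_univ err
          simpa using this
        · intro j hj j' hj' hJ
          rw [hEdef, Finset.mem_image] at hj hj'
          obtain ⟨a, _, rfl⟩ := hj
          obtain ⟨b, _, rfl⟩ := hj'
          rw [hidx a, hidx b] at hJ
          rw [hJ]
        · intro j
          rcases j with i | i
          · by_cases hσi : σ i
            · -- inl i is a test position
              have hpt : pt (Sum.inl i) = (swapMap σ p).2 i := by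
                rw [hptdef]; simp [swapMap, hσi]
              have hmem : (Sum.inl i ∈ E) ↔ (h (zt i) ≠ ((swapMap σ p).2 i).2) := by
                rw [hmemEl i, herrdef]
                simp [hσi]
              rw [hRobdef, hpt]
              refine ⟨zt i, hzt i, ?_⟩
              intro x' hx'
              rw [c2 i x' hx']
              by_cases hE : Sum.inl i ∈ E
              · rw [if_pos hE]
                have := hmem.1 hE
                cases hht : h (zt i) <;> cases ht : ((swapMap σ p).2 i).2 <;> simp_all
              · rw [if_neg hE]
                have := hmem.not.1 hE
                push_neg at this
                exact this
            · -- inl i is a train position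
              have hpt : pt (Sum.inl i) = (swapMap σ p).1 i := by
                rw [hptdef]; simp [swapMap, hσi]
              have hnm : Sum.inl i ∉ E := by
                intro hE
                have := (hmemEl i).1 hE
                rw [this.1] at hσi
                exact hσi rfl
              rw [hRobdef, hpt, if_neg hnm]
              exact ⟨z i, hz i, fun x' hx' => c1 i x' hx'⟩
          · by_cases hσi : σ i
            · -- inr i is a train position
              have hpt : pt (Sum.inr i) = (swapMap σ p).1 i := by
                rw [hptdef]; simp [swapMap, hσi]
              have hnm : Sum.inr i ∉ E := by
                intro hE
                have := (hmemEr i).1 hE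
                rw [this.1] at hσi
                exact Bool.false_ne_true hσi
              rw [hRobdef, hpt, if_neg hnm]
              exact ⟨z i, hz i, fun x' hx' => c1 i x' hx'⟩
            · -- inr i is a test position
              have hpt : pt (Sum.inr i) = (swapMap σ p).2 i := by
                rw [hptdef]; simp [swapMap, hσi]
              have hmem : (Sum.inr i ∈ E) ↔ (h (zt i) ≠ ((swapMap σ p).2 i).2) := by
                rw [hmemEr i, herrdef]
                simp [hσi, Bool.eq_false_iff]
              rw [hRobdef, hpt]
              refine ⟨zt i, hzt i, ?_⟩
              intro x' hx'
              rw [c2 i x' hx']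
              by_cases hE : Sum.inr i ∈ E
              · rw [if_pos hE]
                have := hmem.1 hE
                cases hht : h (zt i) <;> cases ht : ((swapMap σ p).2 i).2 <;> simp_all
              · rw [if_neg hE]
                have := hmem.not.1 hE
                push_neg at this
                exact this
      refine Finset.mem_biUnion.2 ⟨E, hEFp, Finset.mem_filter.2 ⟨Finset.mem_univ _, ?_⟩⟩
      intro j hj
      rw [hEdef, Finset.mem_image] at hj
      obtain ⟨a, _, rfl⟩ := hj
      rw [hidx a]
      by_cases hsa : σ a <;> simp [hsa]
    -- counting
    have hb1 : (Finset.univ.filter (fun σ : Fin n → Bool => swapMap σ p ∉ S)).card ≤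
        ∑ E ∈ Fp, (Finset.univ.filter
          (fun σ : Fin n → Bool => ∀ j ∈ E, σ (Sum.elim id id j) = Sum.isLeft j)).card :=
      (Finset.card_le_card hsub).trans Finset.card_biUnion_le
    set cnt : Finset (Fin n ⊕ Fin n) → ℕ := fun E => (Finset.univ.filter
      (fun σ : Fin n → Bool => ∀ j ∈ E, σ (Sum.elim id id j) = Sum.isLeft j)).card with hcntdef
    have hb2 : (Finset.univ.filter
        (fun σ : Fin n → Bool => swapMap σ p ∉ S)).card * 2 ^ κ ≤
        ∑ E ∈ Fp, cnt E * 2 ^ κ := by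
      rw [← Finset.sum_mul]
      exact Nat.mul_le_mul_right _ hb1
    have hprop : ∀ E ∈ Fp, κ ≤ E.card ∧ E.card ≤ n ∧
        (∀ j ∈ E, ∀ j' ∈ E, Sum.elim id id j = Sum.elim id id j' → j = j') :=
      fun E hE => ((Finset.mem_filter.1 hE).2).1
    have hcnt2 : ∀ E ∈ Fp, cnt E * 2 ^ E.card ≤ 2 ^ n :=
      fun E hE => aux_count_swaps E (hprop E hE).2.2
    have hcnt3 : ∀ E ∈ Fp, cnt E * 2 ^ κ ≤ 2 ^ n := by
      intro E hE
      calc cnt E * 2 ^ κ ≤ cnt E * 2 ^ E.card :=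
            Nat.mul_le_mul_left _ (Nat.pow_le_pow_right (by norm_num) (hprop E hE).1)
        _ ≤ 2 ^ n := hcnt2 E hE
    have hm : Fintype.card (Fin n ⊕ Fin n) = 2 * n := by
      simp [Fintype.card_sum]
      omega
    have hfinal : ∑ E ∈ Fp, cnt E * 2 ^ κ ≤ (2 * n) ^ d * 2 ^ n := by
      by_cases hd1 : d = 1
      · subst hd1
        have h2N : 2 * 2 ^ (n - 1) = 2 ^ n := by
          have hsn : n - 1 + 1 = n := by omega
          calc 2 * 2 ^ (n - 1) = 2 ^ (n - 1 + 1) := (pow_succ' 2 (n - 1)).symm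
            _ = 2 ^ n := by rw [hsn]
        have hκ2 : 2 ≤ κ := by
          have h1le : (1 : ℝ) ≤ B := by
            rw [hBdef]
            push_cast
            have hl1 : (1 : ℝ) ≤ Real.logb 2 (2 * n) := by
              rw [Real.le_logb_iff_rpow_le (by norm_num) (by linarith)]
              rw [Real.rpow_one]
              have hn1R : (1 : ℝ) ≤ (n : ℝ) := by exact_mod_cast hn
              linarith
            nlinarith [hlogb_pos]
          have : 1 ≤ Nat.floor B := Nat.le_floor (by exact_mod_cast h1le)
          omega
        have hsum := aux_d1_sum Fp hVC hκ2 (n' := n) (by omega)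
          (fun E hE => ⟨(hprop E hE).1, (hprop E hE).2.1⟩)
          (2 ^ (n - 1)) (fun E => cnt E * 2 ^ κ)
          (fun E hE => by rw [h2N]; exact hcnt3 E hE)
          (fun E hE hne => by
            have hκ1 : κ + 1 ≤ E.card := by
              have := (hprop E hE).1
              omega
            have hstep : cnt E * 2 ^ (κ + 1) ≤ 2 ^ n := by
              calc cnt E * 2 ^ (κ + 1) ≤ cnt E * 2 ^ E.card :=
                    Nat.mul_le_mul_left _ (Nat.pow_le_pow_right (by norm_num) hκ1)
                _ ≤ 2 ^ n := hcnt2 E hE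
            have : (cnt E * 2 ^ κ) * 2 ≤ 2 ^ (n - 1) * 2 := by
              calc (cnt E * 2 ^ κ) * 2 = cnt E * 2 ^ (κ + 1) := by rw [pow_succ]; ring
                _ ≤ 2 ^ n := hstep
                _ = 2 ^ (n - 1) * 2 := by rw [← h2N]; ring
            exact Nat.le_of_mul_le_mul_right this (by norm_num))
        calc ∑ E ∈ Fp, cnt E * 2 ^ κ ≤
            Fintype.card (Fin n ⊕ Fin n) * (2 * 2 ^ (n - 1)) := hsum
          _ = (2 * n) ^ 1 * 2 ^ n := by rw [hm, h2N, pow_one]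
      · have hFpcard : Fp.card ≤ (2 * n) ^ d := by
          refine (aux_card_le_sum_choose Fp hVC).trans ?_
          rw [hm]
          exact aux_sum_choose_le_pow (by omega) hd1
        calc ∑ E ∈ Fp, cnt E * 2 ^ κ ≤ Fp.card * 2 ^ n := by
              have := Finset.sum_le_card_nsmul Fp (fun E => cnt E * 2 ^ κ) (2 ^ n) hcnt3
              simpa [smul_eq_mul] using this
          _ ≤ (2 * n) ^ d * 2 ^ n := Nat.mul_le_mul_right _ hFpcard
    exact hb2.trans hfinal
  -- MEASURE-THEORETIC PART
  haveI : IsProbabilityMeasure (Measure.pi fun _ : Fin n => D) := by infer_instance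
  haveI : IsProbabilityMeasure μ2 := by rw [hμ2]; infer_instance
  set C : Set ((Fin n → X × Bool) × (Fin n → X × Bool)) := (toMeasurable μ2 S)ᶜ with hCdef
  have hC : MeasurableSet C := (measurableSet_toMeasurable μ2 S).compl
  have hCsub : C ⊆ Sᶜ := Set.compl_subset_compl.2 (subset_toMeasurable μ2 S)
  have hμ2C : μ2 C ≤ ENNReal.ofReal δ := by
    have hpres : ∀ σ : Fin n → Bool, μ2 (swapMap σ ⁻¹' C) = μ2 C := fun σ =>
      (swapMap_measurePreserving σ D).measure_preimage hC.nullMeasurableSet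
    have hmeaspre : ∀ σ : Fin n → Bool, MeasurableSet (swapMap σ ⁻¹' C) := fun σ =>
      (swapMap_measurePreserving σ D).measurable hC
    -- pointwise indicator-sum bound
    have hpoint : ∀ q : (Fin n → X × Bool) × (Fin n → X × Bool),
        (∑ σ : Fin n → Bool, (swapMap σ ⁻¹' C).indicator (fun _ => (1 : ℝ≥0∞)) q) ≤
          ENNReal.ofReal (2 ^ n * δ) := by
      intro q
      have h1 : (∑ σ : Fin n → Bool, (swapMap σ ⁻¹' C).indicator (fun _ => (1 : ℝ≥0∞)) q) =
          ((Finset.univ.filter (fun σ : Fin n → Bool => swapMap σ q ∈ C)).card : ℝ≥0∞) := by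
        rw [Finset.card_filter]
        push_cast
        refine Finset.sum_congr rfl fun σ _ => ?_
        rw [Set.indicator_apply]
        by_cases hq : swapMap σ q ∈ C
        · rw [if_pos hq, if_pos (Set.mem_preimage.2 hq)]
        · rw [if_neg hq, if_neg (fun hc => hq (Set.mem_preimage.1 hc))]
      rw [h1]
      have h2 : (Finset.univ.filter (fun σ : Fin n → Bool => swapMap σ q ∈ C)).card ≤
          (Finset.univ.filter (fun σ : Fin n → Bool => swapMap σ q ∉ S)).card := by
        apply Finset.card_le_card
        intro σ hσ
        rw [Finset.mem_filter] at hσ ⊢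
        exact ⟨hσ.1, hCsub hσ.2⟩
      have h3 : ((Finset.univ.filter (fun σ : Fin n → Bool => swapMap σ q ∉ S)).card : ℝ) ≤
          2 ^ n * δ := by
        refine aux_real hn hδ hδ1 ?_ (key q)
        rw [← hBdef]
        exact hBκ
      have h4 : ((Finset.univ.filter (fun σ : Fin n → Bool => swapMap σ q ∈ C)).card : ℝ) ≤
          2 ^ n * δ := le_trans (by exact_mod_cast h2) h3
      calc ((Finset.univ.filter (fun σ : Fin n → Bool => swapMap σ q ∈ C)).card : ℝ≥0∞) =
          ENNReal.ofReal ((Finset.univ.filter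
            (fun σ : Fin n → Bool => swapMap σ q ∈ C)).card : ℝ) := by
            rw [ENNReal.ofReal_natCast]
        _ ≤ ENNReal.ofReal (2 ^ n * δ) := ENNReal.ofReal_le_ofReal h4
    -- integrate
    have hcard2n : (Finset.univ : Finset (Fin n → Bool)).card = 2 ^ n := by
      rw [Finset.card_univ, Fintype.card_fun, Fintype.card_bool, Fintype.card_fin]
    have hsum1 : (∑ σ : Fin n → Bool, μ2 (swapMap σ ⁻¹' C)) = (2 ^ n : ℕ) * μ2 C := by
      rw [Finset.sum_congr rfl (fun σ _ => hpres σ), Finset.sum_const, hcard2n, nsmul_eq_mul]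
    have hsum2 : (∑ σ : Fin n → Bool, μ2 (swapMap σ ⁻¹' C)) =
        ∫⁻ q, (∑ σ : Fin n → Bool,
          (swapMap σ ⁻¹' C).indicator (fun _ => (1 : ℝ≥0∞)) q) ∂μ2 := by
      rw [lintegral_finset_sum]
      · exact Finset.sum_congr rfl fun σ _ => (lintegral_indicator_one (hmeaspre σ)).symm
      · exact fun σ _ => measurable_const.indicator (hmeaspre σ)
    have hint : (∑ σ : Fin n → Bool, μ2 (swapMap σ ⁻¹' C)) ≤ ENNReal.ofReal (2 ^ n * δ) := by
      rw [hsum2]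
      calc ∫⁻ q, (∑ σ : Fin n → Bool,
            (swapMap σ ⁻¹' C).indicator (fun _ => (1 : ℝ≥0∞)) q) ∂μ2 ≤
          ∫⁻ _, ENNReal.ofReal (2 ^ n * δ) ∂μ2 := lintegral_mono hpoint
        _ = ENNReal.ofReal (2 ^ n * δ) := by
            rw [lintegral_const, measure_univ, mul_one]
    have hofr : ENNReal.ofReal (2 ^ n * δ) = ((2 ^ n : ℕ) : ℝ≥0∞) * ENNReal.ofReal δ := by
      rw [ENNReal.ofReal_mul (by positivity)]
      congr 1
      rw [show ((2 : ℝ) ^ n) = (((2 ^ n : ℕ) : ℝ)) by push_cast; ring, ENNReal.ofReal_natCast]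
    have hmul : ((2 ^ n : ℕ) : ℝ≥0∞) * μ2 C ≤ ((2 ^ n : ℕ) : ℝ≥0∞) * ENNReal.ofReal δ :=
      le_trans (le_of_eq hsum1.symm) (hint.trans (le_of_eq hofr))
    have h2n0 : ((2 ^ n : ℕ) : ℝ≥0∞) ≠ 0 := by
      simp [pow_ne_zero]
    have h2ntop : ((2 ^ n : ℕ) : ℝ≥0∞) ≠ ⊤ := ENNReal.natCast_ne_top _
    exact (ENNReal.mul_le_mul_iff_right h2n0 h2ntop).1 hmul
  have hSmeas : μ2 S = 1 - μ2 C := by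
    rw [← measure_toMeasurable S]
    have h1 : toMeasurable μ2 S = Cᶜ := by rw [hCdef, compl_compl]
    rw [h1, measure_compl hC (measure_ne_top _ _), measure_univ]
  calc ENNReal.ofReal (1 - δ) = ENNReal.ofReal 1 - ENNReal.ofReal δ :=
        ENNReal.ofReal_sub 1 hδ.le
    _ = 1 - ENNReal.ofReal δ := by rw [ENNReal.ofReal_one]
    _ ≤ 1 - μ2 C := tsub_le_tsub_left hμ2C 1
    _ = μ2 S := hSmeas.symm

end MainProof
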